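/- arXiv:2412.02535 — 3 statements merged into one kernel-verified Lean document; each statement's English description precedes it below -/
import Mathlib

section
/- Control of attacks, outside-ball bound. Let ϱ and ϱ^m be Borel probability measures on ℝ^d. Fix α ≥ 1/(k_G K_G (R^K_G)^{k_G}). Let r_G ∈ (0, min{R_G, R^H_G, R^K_G, (min{G_∞, (η_G R^K_G)^{1/ν_G}, K_G (R^K_G)^{k_G}}/(2H_G))^{1/h_G}}] and δ_q ∈ (0, min{L_∞, (η_L r_G)^{1/ν_L}}/2], and assume there exists β ∈ (0,1) satisfying q_β[ϱ] + δ_q ≤ L̲ + min{L_∞, (η_L r_G)^{1/ν_L}}. Let r ∈ (0, min{r_G, R^H_L, (δ_q/H_L)^{1/h_L}}] with B_r(θ*) ⊆ B_R(0), and let u > 0 satisfy u + G_r + H_G r_G^{h_G} ≤ min{G_∞, (η_G R^K_G)^{1/ν_G}, K_G (R^K_G)^{k_G}}. Then exp(α G_r) · ∫_{Q_β[ϱ] ∩ (B_{R^K_G}(θ*))^c} ‖θ−θ*‖₂ exp(−α K_G ‖θ−θ*‖₂^{k_G}) dϱ^m(θ) ≤ R^K_G · exp(−αu) · ϱ^m(N_{r_G}(Θ))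 ≤ R^K_G · exp(−αu). -/
open MeasureTheory Set
open scoped RealInnerProductSpace ENNReal

noncomputable section

/-- The `a`-quantile of `ϱ` under `L`:
`q_a[ϱ] := inf {q : a ≤ ϱ({L ≤ q})}`. -/
def quant {d : ℕ} (L : EuclideanSpace ℝ (Fin d) → ℝ)
    (ϱ : Measure (EuclideanSpace ℝ (Fin d))) (a : ℝ) : ℝ :=
  sInf {q : ℝ | a ≤ (ϱ {θ | L θ ≤ q}).toReal}

/-- The quantiled sub-level set `Q_β[ϱ]`. -/
def Qset {d : ℕ} (L : EuclideanSpace ℝ (Fin d) → ℝ) (R δq β : ℝ)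
    (ϱ : Measure (EuclideanSpace ℝ (Fin d))) : Set (EuclideanSpace ℝ (Fin d)) :=
  {θ | θ ∈ Metric.closedBall (0 : EuclideanSpace ℝ (Fin d)) R ∧
    L θ ≤ (2 / β) * (∫ a in (β / 2)..β, quant L ϱ a) + δq}

/-- The consensus point `m_{α,β}[ϱ]`, a weighted average with weight
`ω_α(θ) = exp(-α G θ)` over `Q_β[ϱ]`. -/
def consensus {d : ℕ} (L G : EuclideanSpace ℝ (Fin d) → ℝ) (R δq α β : ℝ)
    (ϱ : Measure (EuclideanSpace ℝ (Fin d))) : EuclideanSpace ℝ (Fin d) :=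
  (∫ θ in Qset L R δq β ϱ, Real.exp (-α * G θ) ∂ϱ)⁻¹ •
    ∫ θ in Qset L R δq β ϱ, Real.exp (-α * G θ) • θ ∂ϱ

/-- The argmin set `Θ` of `L`. -/
def argminSet {d : ℕ} (L : EuclideanSpace ℝ (Fin d) → ℝ) : Set (EuclideanSpace ℝ (Fin d)) :=
  {θ | ∀ θ', L θ ≤ L θ'}

/-- The neighborhood `N_r(S) = {θ : dist(θ, S) ≤ r}`. -/
def nbhd {d : ℕ} (S : Set (EuclideanSpace ℝ (Fin d))) (r : ℝ) :
    Set (EuclideanSpace ℝ (Fin d)) :=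
  {θ | Metric.infDist θ S ≤ r}

/-- `G_r := sup_{θ ∈ B_r(θ*)} G(θ) - G(θ*)`. -/
def Gsup {d : ℕ} (G : EuclideanSpace ℝ (Fin d) → ℝ) (θstar : EuclideanSpace ℝ (Fin d))
    (r : ℝ) : ℝ :=
  sSup (G '' Metric.closedBall θstar r) - G θstar

set_option maxHeartbeats 2000000 in
/-- Control of attacks: outside-ball bound. -/
theorem control_of_attacks_outside_ball
    {d : ℕ} (hd : 1 ≤ d)
    (L G : EuclideanSpace ℝ (Fin d) → ℝ)
    (hLc : Continuous L) (hGc : Continuous G)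
    (θstar : EuclideanSpace ℝ (Fin d))
    (hθstar : θstar ∈ argminSet L)
    (hA1min : ∀ θ ∈ argminSet L, G θstar ≤ G θ)
    (hA1uniq : ∀ θ ∈ argminSet L, (∀ θ' ∈ argminSet L, G θ ≤ G θ') → θ = θstar)
    (hL_exp HL RHL : ℝ) (hL_exp_pos : 0 < hL_exp) (hHL : 0 < HL) (hRHL : 0 < RHL)
    (hA2 : ∀ θ ∈ Metric.closedBall θstar RHL, L θ - L θstar ≤ HL * ‖θ - θstar‖ ^ hL_exp)
    (Linfty RL ηL νL : ℝ) (hLinfty : 0 < Linfty) (hRL : 0 < RL) (hηL : 0 < ηL) (hνL : 0 < νL)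
    (hA3a : ∀ θ ∈ nbhd (argminSet L) RL,
      Metric.infDist θ (argminSet L) ≤ (1 / ηL) * (L θ - L θstar) ^ νL)
    (hA3b : ∀ θ, θ ∉ nbhd (argminSet L) RL → Linfty < L θ - L θstar)
    (hG_exp HG RHG : ℝ) (hG_exp_pos : 0 < hG_exp) (hHG : 0 < HG) (hRHG : 0 < RHG)
    (hA4 : ∀ θ ∈ Metric.closedBall θstar RHG, G θ - G θstar ≤ HG * ‖θ - θstar‖ ^ hG_exp)
    (Ginfty RG ηG νG : ℝ) (hGinfty : 0 < Ginfty) (hRG : 0 < RG) (hηG : 0 < ηG) (hνG : 0 < νG)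
    (hA5 : ∀ rg : ℝ, 0 < rg → rg ≤ RG → ∃ θt ∈ Metric.closedBall θstar rg,
      (∀ θ ∈ Metric.closedBall θstar rg, ‖θ - θt‖ ≤ (1 / ηG) * (G θ - G θt) ^ νG) ∧
      (∀ θ ∈ nbhd (argminSet L) rg \ Metric.closedBall θstar rg, Ginfty < G θ - G θt))
    (kG KG RKG : ℝ) (hkG : 0 < kG) (hKG : 0 < KG) (hRKG : 0 < RKG)
    (hA6 : ∀ θ ∈ (Metric.closedBall θstar RKG)ᶜ ∩ nbhd (argminSet L) RG,
      KG * ‖θ - θstar‖ ^ kG ≤ G θ - G θstar)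
    (ϱ ϱm : Measure (EuclideanSpace ℝ (Fin d)))
    [IsProbabilityMeasure ϱ] [IsProbabilityMeasure ϱm]
    (α : ℝ) (hα : 1 / (kG * KG * RKG ^ kG) ≤ α)
    (rg : ℝ) (hrg : rg ∈ Set.Ioc (0 : ℝ) (min RG (min RHG (min RKG
      ((min Ginfty (min ((ηG * RKG) ^ (1 / νG)) (KG * RKG ^ kG)) / (2 * HG)) ^ (1 / hG_exp))))))
    (R δq : ℝ) (hR : 0 < R)
    (hδq : δq ∈ Set.Ioc (0 : ℝ) (min Linfty ((ηL * rg) ^ (1 / νL)) / 2))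
    (β : ℝ) (hβ : β ∈ Set.Ioo (0 : ℝ) 1)
    (hqβ : quant L ϱ β + δq ≤ L θstar + min Linfty ((ηL * rg) ^ (1 / νL)))
    (r : ℝ) (hr : r ∈ Set.Ioc (0 : ℝ) (min rg (min RHL ((δq / HL) ^ (1 / hL_exp)))))
    (hrR : Metric.closedBall θstar r ⊆ Metric.closedBall (0 : EuclideanSpace ℝ (Fin d)) R)
    (u : ℝ) (hu : 0 < u)
    (husum : u + Gsup G θstar r + HG * rg ^ hG_exp
      ≤ min Ginfty (min ((ηG * RKG) ^ (1 / νG)) (KG * RKG ^ kG))) :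
    Real.exp (α * Gsup G θstar r)
        * (∫ θ in Qset L R δq β ϱ ∩ (Metric.closedBall θstar RKG)ᶜ,
            ‖θ - θstar‖ * Real.exp (-α * KG * ‖θ - θstar‖ ^ kG) ∂ϱm)
        ≤ RKG * Real.exp (-α * u) * (ϱm (nbhd (argminSet L) rg)).toReal
    ∧ RKG * Real.exp (-α * u) * (ϱm (nbhd (argminSet L) rg)).toReal
        ≤ RKG * Real.exp (-α * u) := by
  obtain ⟨hrg0, hrgle⟩ := hrg
  obtain ⟨hδq0, hδqle⟩ := hδq
  obtain ⟨hβ0, hβ1⟩ := hβ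
  obtain ⟨hr0, hrle⟩ := hr
  have hP : (0:ℝ) < kG * KG * RKG ^ kG := by positivity
  have hα0 : (0:ℝ) < α := lt_of_lt_of_le (by positivity) hα
  -- measurability of sublevel sets
  have hMeasL : ∀ q : ℝ, MeasurableSet {θ : EuclideanSpace ℝ (Fin d) | L θ ≤ q} :=
    fun q => measurableSet_le hLc.measurable measurable_const
  -- nonemptiness of quantile sets
  have hSne : ∀ a : ℝ, a < 1 → ∃ q : ℝ, a ≤ (ϱ {θ | L θ ≤ q}).toReal := by
    intro a ha
    have hmono : Monotone (fun n : ℕ => {θ : EuclideanSpace ℝ (Fin d) | L θ ≤ (n:ℝ)}) := by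
      intro m n hmn θ hθ
      exact le_trans (show L θ ≤ (m:ℝ) from hθ) (by exact_mod_cast hmn)
    have hU : (⋃ n : ℕ, {θ : EuclideanSpace ℝ (Fin d) | L θ ≤ (n:ℝ)}) = Set.univ := by
      ext θ
      simp only [Set.mem_iUnion, Set.mem_univ, iff_true, Set.mem_setOf_eq]
      obtain ⟨n, hn⟩ := exists_nat_ge (L θ)
      exact ⟨n, hn⟩
    have ht := tendsto_measure_iUnion_atTop (μ := ϱ) hmono
    rw [hU, measure_univ] at ht
    have hlt : ENNReal.ofReal a < 1 := by
      rcases le_or_gt a 0 with h | h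
      · simpa [ENNReal.ofReal_eq_zero.mpr h] using (zero_lt_one (α := ℝ≥0∞))
      · exact ENNReal.ofReal_lt_one.mpr ha
    obtain ⟨n, hn⟩ := (ht.eventually (eventually_gt_nhds hlt)).exists
    exact ⟨n, (ENNReal.ofReal_le_iff_le_toReal (measure_ne_top _ _)).mp hn.le⟩
  -- bddBelow of quantile sets
  have hSbdd : ∀ a : ℝ, 0 < a →
      BddBelow {q : ℝ | a ≤ (ϱ {θ | L θ ≤ q}).toReal} := by
    intro a ha
    have hanti : Antitone (fun n : ℕ => {θ : EuclideanSpace ℝ (Fin d) | L θ ≤ -(n:ℝ)}) := by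
      intro m n hmn θ hθ
      refine le_trans (show L θ ≤ -(n:ℝ) from hθ) ?_
      have : (m:ℝ) ≤ n := by exact_mod_cast hmn
      linarith
    have hI : (⋂ n : ℕ, {θ : EuclideanSpace ℝ (Fin d) | L θ ≤ -(n:ℝ)}) = ∅ := by
      ext θ
      simp only [Set.mem_iInter, Set.mem_setOf_eq, Set.mem_empty_iff_false, iff_false, not_forall]
      obtain ⟨n, hn⟩ := exists_nat_gt (-(L θ))
      exact ⟨n, by push_neg; linarith⟩
    have ht := tendsto_measure_iInter_atTop (μ := ϱ)
      (fun n => (hMeasL _).nullMeasurableSet) hanti ⟨0, measure_ne_top _ _⟩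
    rw [hI, measure_empty] at ht
    have h0 : (0:ℝ≥0∞) < ENNReal.ofReal a := ENNReal.ofReal_pos.mpr ha
    obtain ⟨n, hn⟩ := (ht.eventually (eventually_lt_nhds h0)).exists
    refine ⟨-(n:ℝ), fun q hq => ?_⟩
    by_contra hlt
    push_neg at hlt
    have hqs : ϱ {θ | L θ ≤ q} ≤ ϱ {θ | L θ ≤ -(n:ℝ)} :=
      measure_mono (fun θ hθ => le_trans hθ hlt.le)
    have : ENNReal.ofReal a ≤ ϱ {θ | L θ ≤ -(n:ℝ)} :=
      le_trans ((ENNReal.ofReal_le_iff_le_toReal (measure_ne_top _ _)).mpr hq) hqs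
    exact absurd (lt_of_le_of_lt this hn) (lt_irrefl _)
  -- monotonicity of quant
  have hquant_mono : ∀ a b : ℝ, 0 < a → a ≤ b → b < 1 → quant L ϱ a ≤ quant L ϱ b := by
    intro a b ha hab hb1
    apply csInf_le_csInf (hSbdd a ha)
    · obtain ⟨q, hq⟩ := hSne b hb1
      exact ⟨q, hq⟩
    · intro q hq
      exact le_trans hab hq
  -- quantile integral bound
  have hβ2 : β / 2 ≤ β := by linarith
  have huIcc : Set.uIcc (β/2) β = Set.Icc (β/2) β := Set.uIcc_of_le hβ2
  have hmonoOn : MonotoneOn (quant L ϱ) (Set.uIcc (β/2) β) := by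
    rw [huIcc]
    intro a ha b hb hab
    exact hquant_mono a b (by linarith [ha.1]) hab (lt_of_le_of_lt hb.2 hβ1)
  have hintle : (∫ a in (β/2)..β, quant L ϱ a) ≤ ∫ a in (β/2)..β, (fun _ => quant L ϱ β) a := by
    apply intervalIntegral.integral_mono_on hβ2 hmonoOn.intervalIntegrable
      intervalIntegrable_const
    intro a ha
    exact hquant_mono a β (by linarith [ha.1]) ha.2 hβ1
  have hconstint : (∫ a in (β/2)..β, (fun _ => quant L ϱ β) a) = (β - β/2) * quant L ϱ β := by
    simp [intervalIntegral.integral_const, smul_eq_mul]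
  have hQbound : (2/β) * (∫ a in (β/2)..β, quant L ϱ a) + δq ≤ quant L ϱ β + δq := by
    have h1 : (2/β) * (∫ a in (β/2)..β, quant L ϱ a)
        ≤ (2/β) * ((β - β/2) * quant L ϱ β) := by
      rw [← hconstint]
      exact mul_le_mul_of_nonneg_left hintle (by positivity)
    have h2 : (2/β) * ((β - β/2) * quant L ϱ β) = quant L ϱ β := by
      field_simp
      ring
    linarith
  -- containment of the attack set in the rg-neighborhood
  set S := Qset L R δq β ϱ ∩ (Metric.closedBall θstar RKG)ᶜ with hSdef
  have hsub : S ⊆ nbhd (argminSet L) rg := by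
    intro θ hθ
    have hθQ : L θ ≤ (2/β) * (∫ a in (β/2)..β, quant L ϱ a) + δq := hθ.1.2
    have hLθ : L θ - L θstar ≤ min Linfty ((ηL * rg) ^ (1/νL)) := by linarith
    have hLθ0 : 0 ≤ L θ - L θstar := sub_nonneg.mpr (hθstar θ)
    have hmem : θ ∈ nbhd (argminSet L) RL := by
      by_contra hn
      have h1 := hA3b θ hn
      have h2 : L θ - L θstar ≤ Linfty := le_trans hLθ (min_le_left _ _)
      linarith
    have hd := hA3a θ hmem
    have hpow : (L θ - L θstar) ^ νL ≤ ηL * rg := by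
      have hb : L θ - L θstar ≤ (ηL * rg) ^ (1/νL) := le_trans hLθ (min_le_right _ _)
      calc (L θ - L θstar) ^ νL ≤ ((ηL * rg) ^ (1/νL)) ^ νL :=
            Real.rpow_le_rpow hLθ0 hb hνL.le
        _ = ηL * rg := by
            rw [← Real.rpow_mul (by positivity), one_div, inv_mul_cancel₀ hνL.ne',
              Real.rpow_one]
    show Metric.infDist θ (argminSet L) ≤ rg
    calc Metric.infDist θ (argminSet L) ≤ (1/ηL) * (L θ - L θstar) ^ νL := hd
      _ ≤ (1/ηL) * (ηL * rg) := mul_le_mul_of_nonneg_left hpow (by positivity)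
      _ = rg := by field_simp
  -- pointwise bound on the integrand
  have hkey : ∀ s : ℝ, RKG ≤ s →
      s * Real.exp (-α * KG * s ^ kG) ≤ RKG * Real.exp (-α * KG * RKG ^ kG) := by
    intro s hs
    have hs0 : 0 < s := lt_of_lt_of_le hRKG hs
    have hmono : MonotoneOn (fun x : ℝ => α * KG * x ^ kG - Real.log x) (Set.Ici RKG) := by
      have hder : ∀ x ∈ Set.Ioi RKG, HasDerivAt (fun x : ℝ => α * KG * x ^ kG - Real.log x)
          (α * KG * (kG * x ^ (kG - 1)) - x⁻¹) x := by
        intro x hx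
        have hx0 : 0 < x := lt_trans hRKG hx
        exact ((Real.hasDerivAt_rpow_const (Or.inl hx0.ne')).const_mul (α * KG)).sub
          (Real.hasDerivAt_log hx0.ne')
      apply monotoneOn_of_deriv_nonneg (convex_Ici RKG)
      · intro x hx
        have hx0 : 0 < x := lt_of_lt_of_le hRKG hx
        exact ((continuousAt_const.mul (Real.continuousAt_rpow_const x kG (Or.inl hx0.ne'))).sub
          (Real.continuousAt_log hx0.ne')).continuousWithinAt
      · rw [interior_Ici]
        intro x hx
        exact ((hder x hx).differentiableAt).differentiableWithinAt
      · rw [interior_Ici]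
        intro x hx
        rw [(hder x hx).deriv]
        have hx0 : 0 < x := lt_trans hRKG hx
        have hxk : RKG ^ kG ≤ x ^ kG := Real.rpow_le_rpow hRKG.le (le_of_lt hx) hkG.le
        have h1 : 1 ≤ α * (kG * KG * RKG ^ kG) := by
          have := (div_le_iff₀ hP).mp hα
          linarith
        have hkey2 : 1 ≤ α * KG * kG * x ^ kG := by
          nlinarith [Real.rpow_pos_of_pos hRKG kG]
        have heq : α * KG * (kG * x ^ (kG - 1)) - x⁻¹ = (α * KG * kG * x ^ kG - 1) * x⁻¹ := by
          rw [Real.rpow_sub hx0, Real.rpow_one]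
          field_simp
        rw [heq]
        exact mul_nonneg (by linarith) (inv_nonneg.mpr hx0.le)
    have hh := hmono (Set.mem_Ici.mpr le_rfl) (Set.mem_Ici.mpr hs) hs
    simp only at hh
    have hexp : Real.exp (Real.log s - α * KG * s ^ kG)
        ≤ Real.exp (Real.log RKG - α * KG * RKG ^ kG) := Real.exp_le_exp.mpr (by linarith)
    rw [Real.exp_sub, Real.exp_sub, Real.exp_log hs0, Real.exp_log hRKG] at hexp
    have e1 : s * Real.exp (-α * KG * s ^ kG) = s / Real.exp (α * KG * s ^ kG) := by
      rw [show -α * KG * s ^ kG = -(α * KG * s ^ kG) by ring, Real.exp_neg]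
      rw [div_eq_mul_inv]
    have e2 : RKG * Real.exp (-α * KG * RKG ^ kG) = RKG / Real.exp (α * KG * RKG ^ kG) := by
      rw [show -α * KG * RKG ^ kG = -(α * KG * RKG ^ kG) by ring, Real.exp_neg]
      rw [div_eq_mul_inv]
    rw [e1, e2]
    exact hexp
  set C := RKG * Real.exp (-α * KG * RKG ^ kG) with hCdef
  have hC0 : 0 ≤ C := by positivity
  set f := fun θ : EuclideanSpace ℝ (Fin d) =>
    ‖θ - θstar‖ * Real.exp (-α * KG * ‖θ - θstar‖ ^ kG) with hfdef
  have hptw : ∀ θ ∈ S, f θ ≤ C := by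
    intro θ hθ
    have hgt : RKG ≤ ‖θ - θstar‖ := by
      have h1 := hθ.2
      simp only [Set.mem_compl_iff, Metric.mem_closedBall, dist_eq_norm, not_le] at h1
      exact h1.le
    exact hkey _ hgt
  have hf0 : ∀ θ, 0 ≤ f θ := fun θ => mul_nonneg (norm_nonneg _) (Real.exp_pos _).le
  have hfcont : Continuous f := by
    apply Continuous.mul ((continuous_id.sub continuous_const).norm)
    apply Real.continuous_exp.comp
    apply Continuous.mul continuous_const
    apply continuous_iff_continuousAt.mpr
    intro θ
    exact (Real.continuousAt_rpow_const _ _ (Or.inr hkG.le)).comp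
      ((continuous_id.sub continuous_const).norm.continuousAt)
  have hSmeas : MeasurableSet S := by
    apply MeasurableSet.inter
    · exact (Metric.isClosed_closedBall.measurableSet).inter
        (measurableSet_le hLc.measurable measurable_const)
    · exact (Metric.isClosed_closedBall.measurableSet).compl
  have hfint : IntegrableOn f S ϱm := by
    apply Integrable.mono' (integrable_const C) (hfcont.aestronglyMeasurable.restrict)
    refine (ae_restrict_iff' hSmeas).mpr (ae_of_all _ (fun θ hθ => ?_))
    rw [Real.norm_eq_abs, abs_of_nonneg (hf0 θ)]
    exact hptw θ hθ
  have hint1 : (∫ θ in S, f θ ∂ϱm) ≤ C * (ϱm S).toReal := by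
    have h1 : (∫ θ in S, f θ ∂ϱm) ≤ ∫ _ in S, C ∂ϱm := by
      apply setIntegral_mono_on hfint _ hSmeas hptw
      exact (integrableOn_const_iff).mpr (Or.inr (measure_lt_top _ _))
    rw [setIntegral_const, smul_eq_mul, measureReal_def] at h1
    linarith
  have hmeasle : (ϱm S).toReal ≤ (ϱm (nbhd (argminSet L) rg)).toReal :=
    ENNReal.toReal_mono (measure_ne_top _ _) (measure_mono hsub)
  have hint2 : (∫ θ in S, f θ ∂ϱm) ≤ C * (ϱm (nbhd (argminSet L) rg)).toReal :=
    le_trans hint1 (mul_le_mul_of_nonneg_left hmeasle hC0)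
  -- the exponential comparison
  have hexpkey : Real.exp (α * Gsup G θstar r) * C ≤ RKG * Real.exp (-α * u) := by
    have hrgpow : 0 ≤ HG * rg ^ hG_exp :=
      mul_nonneg hHG.le (Real.rpow_nonneg hrg0.le _)
    have h3 : u + Gsup G θstar r ≤ KG * RKG ^ kG := by
      have := le_trans husum (le_trans (min_le_right _ _) (min_le_right _ _))
      linarith
    have h4 : α * Gsup G θstar r + (-α * KG * RKG ^ kG) ≤ -α * u := by
      nlinarith [mul_le_mul_of_nonneg_left h3 hα0.le]
    calc Real.exp (α * Gsup G θstar r) * C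
        = RKG * Real.exp (α * Gsup G θstar r + (-α * KG * RKG ^ kG)) := by
          rw [Real.exp_add]; ring
      _ ≤ RKG * Real.exp (-α * u) :=
          mul_le_mul_of_nonneg_left (Real.exp_le_exp.mpr h4) hRKG.le
  constructor
  · calc Real.exp (α * Gsup G θstar r) * (∫ θ in S, f θ ∂ϱm)
        ≤ Real.exp (α * Gsup G θstar r) * (C * (ϱm (nbhd (argminSet L) rg)).toReal) :=
          mul_le_mul_of_nonneg_left hint2 (Real.exp_pos _).le
      _ = (Real.exp (α * Gsup G θstar r) * C) * (ϱm (nbhd (argminSet L) rg)).toReal := by ring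
      _ ≤ RKG * Real.exp (-α * u) * (ϱm (nbhd (argminSet L) rg)).toReal :=
          mul_le_mul_of_nonneg_right hexpkey ENNReal.toReal_nonneg
  · have hle1 : (ϱm (nbhd (argminSet L) rg)).toReal ≤ 1 := by
      have h1 : ϱm (nbhd (argminSet L) rg) ≤ 1 := prob_le_one
      calc (ϱm (nbhd (argminSet L) rg)).toReal ≤ (1 : ℝ≥0∞).toReal :=
            ENNReal.toReal_mono (by simp) h1
        _ = 1 := by simp
    have h0 : 0 ≤ RKG * Real.exp (-α * u) := by positivity
    exact mul_le_of_le_one_right h0 hle1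
end
end

section
/- Inner inclusion for the quantiled sub-level set. Let L : ℝ^d → ℝ be continuous, let L̲ := inf_θ L(θ) be attained at θ* ∈ ℝ^d, and assume (A2): there exist h_L, R^H_L > 0 and H_L < ∞ with L(θ) − L̲ ≤ H_L‖θ−θ*‖₂^{h_L} for all θ ∈ B_{R^H_L}(θ*). Fix R > 0, δ_q > 0, β ∈ (0,1), and let r ∈ (0, min{R^H_L, (δ_q/H_L)^{1/h_L}}] be such that B_r(θ*) ⊆ B_R(0). Then for every Borel probability measure ϱ on ℝ^d one has B_r(θ*) ⊆ Q_β[ϱ]. -/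
open MeasureTheory Set
open scoped RealInnerProductSpace ENNReal

noncomputable section

/-- Inner inclusion for the quantiled sub-level set: `B_r(θ*) ⊆ Q_β[ϱ]`. -/
theorem ball_subset_Qset {d : ℕ} (hd : 1 ≤ d)
    (L : EuclideanSpace ℝ (Fin d) → ℝ) (hLc : Continuous L)
    (θstar : EuclideanSpace ℝ (Fin d)) (hθstar : ∀ θ', L θstar ≤ L θ')
    (hL_exp HL RHL : ℝ) (hL_exp_pos : 0 < hL_exp) (hHL : 0 < HL) (hRHL : 0 < RHL)
    (hA2 : ∀ θ ∈ Metric.closedBall θstar RHL, L θ - L θstar ≤ HL * ‖θ - θstar‖ ^ hL_exp)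
    (R δq β : ℝ) (hR : 0 < R) (hδq : 0 < δq) (hβ : β ∈ Set.Ioo (0 : ℝ) 1)
    (r : ℝ) (hr : r ∈ Set.Ioc (0 : ℝ) (min RHL ((δq / HL) ^ (1 / hL_exp))))
    (hball : Metric.closedBall θstar r ⊆ Metric.closedBall (0 : EuclideanSpace ℝ (Fin d)) R) :
    ∀ ϱ : Measure (EuclideanSpace ℝ (Fin d)), IsProbabilityMeasure ϱ →
      Metric.closedBall θstar r ⊆ Qset L R δq β ϱ := by
  obtain ⟨hr0, hrle⟩ := hr
  obtain ⟨hβ0, hβ1⟩ := hβ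
  have hrRHL : r ≤ RHL := le_trans hrle (min_le_left _ _)
  have hrq : r ≤ (δq / HL) ^ (1 / hL_exp) := le_trans hrle (min_le_right _ _)
  intro ϱ hϱ θ hθ
  -- lower bound for elements of the quantile set
  have hlb : ∀ a : ℝ, 0 < a → ∀ q ∈ {q : ℝ | a ≤ (ϱ {θ | L θ ≤ q}).toReal},
      L θstar ≤ q := by
    intro a ha q hq
    by_contra hcon
    push_neg at hcon
    have hempty : {θ : EuclideanSpace ℝ (Fin d) | L θ ≤ q} = ∅ := by
      apply eq_empty_of_forall_notMem
      intro θ' hθ'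
      exact absurd (le_trans (hθstar θ') hθ') (not_le.2 hcon)
    rw [Set.mem_setOf_eq, hempty] at hq
    simp at hq
    linarith
  -- nonemptiness of the quantile set for a < 1
  have hne : ∀ a : ℝ, a < 1 → {q : ℝ | a ≤ (ϱ {θ | L θ ≤ q}).toReal}.Nonempty := by
    intro a ha
    have hmono : Monotone (fun n : ℕ => {θ : EuclideanSpace ℝ (Fin d) | L θ ≤ (n : ℝ)}) := by
      intro m n hmn θ' hθ'
      simp only [Set.mem_setOf_eq] at hθ' ⊢
      exact le_trans hθ' (by exact_mod_cast hmn)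
    have hunion : (⋃ n : ℕ, {θ : EuclideanSpace ℝ (Fin d) | L θ ≤ (n : ℝ)}) = Set.univ := by
      apply Set.eq_univ_of_forall
      intro θ'
      obtain ⟨n, hn⟩ := exists_nat_ge (L θ')
      exact Set.mem_iUnion.2 ⟨n, hn⟩
    have htend := tendsto_measure_iUnion_atTop (μ := ϱ) hmono
    rw [hunion, measure_univ] at htend
    have htend2 : Filter.Tendsto (fun n : ℕ => (ϱ {θ | L θ ≤ (n : ℝ)}).toReal)
        Filter.atTop (nhds 1) := by
      have := (ENNReal.tendsto_toReal (by norm_num : (1 : ℝ≥0∞) ≠ ⊤)).comp htend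
      exact this
    have := htend2.eventually_const_le ha
    obtain ⟨n, hn⟩ := this.exists
    exact ⟨(n : ℝ), hn⟩
  -- quantile lower bound
  have hqlb : ∀ a ∈ Set.Icc (β / 2) β, L θstar ≤ quant L ϱ a := by
    intro a ha
    have ha0 : 0 < a := lt_of_lt_of_le (by linarith) ha.1
    exact le_csInf (hne a (lt_of_le_of_lt ha.2 hβ1)) (hlb a ha0)
  -- monotonicity of quantile on the interval
  have hmonoq : MonotoneOn (quant L ϱ) (Set.Icc (β / 2) β) := by
    intro a ha b hb hab
    apply csInf_le_csInf
    · exact ⟨L θstar, hlb a (lt_of_lt_of_le (by linarith) ha.1)⟩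
    · exact hne b (lt_of_le_of_lt hb.2 hβ1)
    · intro q hq
      exact le_trans hab hq
  have hβ2 : β / 2 ≤ β := by linarith
  have hint : IntervalIntegrable (quant L ϱ) volume (β / 2) β := by
    apply MonotoneOn.intervalIntegrable
    rwa [Set.uIcc_of_le hβ2]
  -- integral lower bound
  have hIb : (β - β / 2) * L θstar ≤ ∫ a in (β / 2)..β, quant L ϱ a := by
    have h1 : ∫ _ in (β / 2)..β, L θstar = (β - β / 2) • L θstar :=
      intervalIntegral.integral_const _
    calc (β - β / 2) * L θstar = ∫ _ in (β / 2)..β, L θstar := by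
          rw [h1]; simp [smul_eq_mul]
      _ ≤ ∫ a in (β / 2)..β, quant L ϱ a :=
          intervalIntegral.integral_mono_on hβ2 intervalIntegrable_const hint hqlb
  have hmain : L θstar ≤ (2 / β) * ∫ a in (β / 2)..β, quant L ϱ a := by
    have h2 : (2 / β) * ((β - β / 2) * L θstar) ≤
        (2 / β) * ∫ a in (β / 2)..β, quant L ϱ a :=
      mul_le_mul_of_nonneg_left hIb (by positivity)
    have : (2 / β) * ((β - β / 2) * L θstar) = L θstar := by
      field_simp
      ring
    linarith
  -- bound L θ via (A2)
  have hθRHL : θ ∈ Metric.closedBall θstar RHL :=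
    Metric.closedBall_subset_closedBall hrRHL hθ
  have hA2θ := hA2 θ hθRHL
  have hnorm : ‖θ - θstar‖ ≤ r := by
    rwa [← dist_eq_norm, ← Metric.mem_closedBall]
  have hpow1 : ‖θ - θstar‖ ^ hL_exp ≤ r ^ hL_exp :=
    Real.rpow_le_rpow (norm_nonneg _) hnorm hL_exp_pos.le
  have hpow2 : r ^ hL_exp ≤ δq / HL := by
    calc r ^ hL_exp ≤ ((δq / HL) ^ (1 / hL_exp)) ^ hL_exp :=
          Real.rpow_le_rpow hr0.le hrq hL_exp_pos.le
      _ = (δq / HL) ^ ((1 / hL_exp) * hL_exp) := by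
          rw [← Real.rpow_mul (by positivity)]
      _ = δq / HL := by
          rw [one_div, inv_mul_cancel₀ hL_exp_pos.ne', Real.rpow_one]
  have hLθ : L θ ≤ L θstar + δq := by
    have : HL * ‖θ - θstar‖ ^ hL_exp ≤ δq := by
      calc HL * ‖θ - θstar‖ ^ hL_exp ≤ HL * (δq / HL) := by
            apply mul_le_mul_of_nonneg_left _ hHL.le
            linarith
        _ = δq := by field_simp
    linarith
  exact ⟨hball hθ, by linarith⟩
end
end

section
/- Outer inclusion for the quantiled sub-level set. Let L : ℝ^d → ℝ be continuous, write L̲ := inf_θ L(θ) and Θ := argmin_θ L(θ), assume Θ ≠ ∅, and assume (A3): there exist L_∞, R_L, η_L > 0 and ν_L ∈ (0,∞) with dist(θ,Θ) ≤ (1/η_L)(L(θ)−L̲)^{ν_L} for all θ ∈ N_{R_L}(Θ), and L(θ)−L̲ > L_∞ for all θ ∉ N_{R_L}(Θ). Fix R > 0, δ_q > 0, r_G > 0, and let ϱ be a Borel probability measure on ℝ^d. If β ∈ (0,1) satisfies q_β[ϱ] + δ_q ≤ L̲ + min{L_∞, (η_L r_G)^{1/ν_L}}, then Q_β[ϱ]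 ⊆ N_{r_G}(Θ). -/
open MeasureTheory Set
open scoped RealInnerProductSpace ENNReal

noncomputable section

/-- Outer inclusion for the quantiled sub-level set: `Q_β[ϱ] ⊆ N_{r_G}(Θ)`. -/
theorem Qset_subset_nbhd {d : ℕ} (hd : 1 ≤ d)
    (L : EuclideanSpace ℝ (Fin d) → ℝ) (hLc : Continuous L)
    (θ0 : EuclideanSpace ℝ (Fin d)) (hθ0 : θ0 ∈ argminSet L)
    (Linfty RL ηL νL : ℝ) (hLinfty : 0 < Linfty) (hRL : 0 < RL) (hηL : 0 < ηL) (hνL : 0 < νL)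
    (hA3a : ∀ θ ∈ nbhd (argminSet L) RL,
      Metric.infDist θ (argminSet L) ≤ (1 / ηL) * (L θ - L θ0) ^ νL)
    (hA3b : ∀ θ, θ ∉ nbhd (argminSet L) RL → Linfty < L θ - L θ0)
    (R δq rg : ℝ) (hR : 0 < R) (hδq : 0 < δq) (hrg : 0 < rg)
    (ϱ : Measure (EuclideanSpace ℝ (Fin d))) [IsProbabilityMeasure ϱ]
    (β : ℝ) (hβ : β ∈ Set.Ioo (0 : ℝ) 1)
    (hqβ : quant L ϱ β + δq ≤ L θ0 + min Linfty ((ηL * rg) ^ (1 / νL))) :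
    Qset L R δq β ϱ ⊆ nbhd (argminSet L) rg := by
  obtain ⟨hβ0, hβ1⟩ := hβ
  -- sets in the quantile definition are bounded below by L θ0 (for a > 0)
  have hbdd : ∀ a : ℝ, 0 < a → BddBelow {q : ℝ | a ≤ (ϱ {θ | L θ ≤ q}).toReal} := by
    intro a ha
    refine ⟨L θ0, fun q hq => ?_⟩
    by_contra h
    push_neg at h
    have hempty : {θ : EuclideanSpace ℝ (Fin d) | L θ ≤ q} = ∅ := by
      ext θ
      simp only [mem_setOf_eq, mem_empty_iff_false, iff_false]
      intro hle
      exact absurd (le_trans (hθ0 θ) hle) (not_le.mpr h)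
    simp only [mem_setOf_eq] at hq
    rw [hempty] at hq
    simp only [measure_empty, ENNReal.toReal_zero] at hq
    linarith
  -- the quantile set for β is nonempty
  have hne : {q : ℝ | β ≤ (ϱ {θ | L θ ≤ q}).toReal}.Nonempty := by
    have hmonos : Monotone (fun n : ℕ => {θ : EuclideanSpace ℝ (Fin d) | L θ ≤ n}) := by
      intro m n hmn θ hθ
      simp only [mem_setOf_eq] at hθ ⊢
      exact le_trans hθ (by exact_mod_cast hmn)
    have hUnion : (⋃ n : ℕ, {θ : EuclideanSpace ℝ (Fin d) | L θ ≤ n}) = univ := by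
      ext θ
      simp only [mem_iUnion, mem_setOf_eq, mem_univ, iff_true]
      obtain ⟨n, hn⟩ := exists_nat_ge (L θ)
      exact ⟨n, hn⟩
    have htend : Filter.Tendsto (fun n : ℕ => (ϱ {θ | L θ ≤ (n:ℝ)}).toReal)
        Filter.atTop (nhds 1) := by
      have h1 := MeasureTheory.tendsto_measure_iUnion_atTop (μ := ϱ) hmonos
      rw [hUnion] at h1
      have h2 := (ENNReal.tendsto_toReal (by simp : ϱ univ ≠ ⊤)).comp h1
      simpa [Function.comp_def] using h2
    have := htend.eventually_const_le hβ1
    obtain ⟨n, hn⟩ := this.exists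
    exact ⟨n, hn⟩
  -- quantile is monotone on (0, β]
  have hmono : ∀ a, 0 < a → a ≤ β → quant L ϱ a ≤ quant L ϱ β := by
    intro a ha hab
    apply csInf_le_csInf (hbdd a ha)
    · exact hne
    · intro q hq
      exact le_trans hab hq
  -- bound the averaged quantile by quant β
  have hint : (2 / β) * (∫ a in (β / 2)..β, quant L ϱ a) + δq ≤ quant L ϱ β + δq := by
    have hle : β / 2 ≤ β := by linarith
    have hmonoOn : MonotoneOn (quant L ϱ) (Set.uIcc (β/2) β) := by
      rw [Set.uIcc_of_le hle]
      intro x hx y hy hxy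
      apply csInf_le_csInf (hbdd x (by linarith [hx.1]))
      · obtain ⟨q, hq⟩ := hne
        exact ⟨q, le_trans hy.2 hq⟩
      · intro q hq
        exact le_trans hxy hq
    have hintg : IntervalIntegrable (quant L ϱ) volume (β/2) β :=
      hmonoOn.intervalIntegrable
    have hintc : IntervalIntegrable (fun _ : ℝ => quant L ϱ β) volume (β/2) β :=
      intervalIntegrable_const
    have h1 : (∫ a in (β / 2)..β, quant L ϱ a) ≤ ∫ _ in (β / 2)..β, quant L ϱ β := by
      apply intervalIntegral.integral_mono_on hle hintg hintc
      intro x hx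
      exact hmono x (by linarith [hx.1]) hx.2
    rw [intervalIntegral.integral_const, smul_eq_mul] at h1
    have h2 : (2 / β) * (∫ a in (β / 2)..β, quant L ϱ a) ≤ (2 / β) * ((β - β/2) * quant L ϱ β) := by
      apply mul_le_mul_of_nonneg_left h1 (by positivity)
    have h3 : (2 / β) * ((β - β/2) * quant L ϱ β) = quant L ϱ β := by
      field_simp
      ring
    linarith
  intro θ hθ
  obtain ⟨hθball, hθL⟩ := hθ
  have hLθ : L θ - L θ0 ≤ min Linfty ((ηL * rg) ^ (1 / νL)) := by
    have := le_trans hθL (le_trans hint hqβ)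
    linarith
  have hnonneg : 0 ≤ L θ - L θ0 := sub_nonneg.mpr (hθ0 θ)
  have hinRL : θ ∈ nbhd (argminSet L) RL := by
    by_contra h
    have := hA3b θ h
    have h2 : L θ - L θ0 ≤ Linfty := le_trans hLθ (min_le_left _ _)
    linarith
  have hkey := hA3a θ hinRL
  have hpow : (L θ - L θ0) ^ νL ≤ ηL * rg := by
    have h2 : L θ - L θ0 ≤ (ηL * rg) ^ (1 / νL) := le_trans hLθ (min_le_right _ _)
    have h3 : (L θ - L θ0) ^ νL ≤ ((ηL * rg) ^ (1 / νL)) ^ νL :=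
      Real.rpow_le_rpow hnonneg h2 hνL.le
    rwa [one_div, Real.rpow_inv_rpow (by positivity) hνL.ne'] at h3
  show Metric.infDist θ (argminSet L) ≤ rg
  calc Metric.infDist θ (argminSet L) ≤ (1 / ηL) * (L θ - L θ0) ^ νL := hkey
    _ ≤ (1 / ηL) * (ηL * rg) := by
        apply mul_le_mul_of_nonneg_left hpow (by positivity)
    _ = rg := by field_simp
end
end
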